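/- Let k be a field of characteristic ≠ 2, let n ≥ 1, let W be the split orthogonal space of dimension 2n+1 over k, let g ∈ k[x] be monic of degree n, and suppose f(x) = x·g(x²) is separable. Then there exists a k-linear endomorphism T of W which is skew self-adjoint, i.e. ⟨Tv,w⟩ = −⟨v,Tw⟩ for all v,w ∈ W, and whose characteristic polynomial equals f(x). -/

import Mathlib

open Polynomial Finset Matrix

/-- The Gram matrix of the split orthogonal space of dimension `2n+1` over `k`, in the
standard basis `e₁, …, eₙ, u, fₙ, …, f₁`: it is the anti-diagonal matrix of `1`s. -/
def splitGram (k : Type*) [Field k] (n : ℕ) : Matrix (Fin (2 * n + 1)) (Fin (2 * n + 1)) k :=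
  Matrix.of fun i j => if (i : ℕ) + (j : ℕ) = 2 * n then 1 else 0

/-- The symmetric bilinear form `⟨·,·⟩` of the split orthogonal space of dimension `2n+1`. -/
def splitBilin {k : Type*} [Field k] {n : ℕ} (v w : Fin (2 * n + 1) → k) : k :=
  dotProduct v ((splitGram k n).mulVec w)

namespace SkewAux

variable {k : Type*} [Field k]

lemma negX_pow (i : ℕ) : (-X : k[X]) ^ i = C ((-1 : k) ^ i) * X ^ i := by
  rw [neg_pow]
  congr 1
  rw [_root_.map_pow, _root_.map_neg, _root_.map_one]

lemma coeff_comp_negX (p : k[X]) (m : ℕ) :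
    (p.comp (-X)).coeff m = (-1) ^ m * p.coeff m := by
  induction p using Polynomial.induction_on' with
  | add p q hp hq => simp [add_comp, hp, hq, mul_add]
  | monomial i c =>
      rw [← C_mul_X_pow_eq_monomial, mul_comp, C_comp, pow_comp, X_comp, negX_pow,
        ← mul_assoc, ← _root_.map_mul, coeff_C_mul, coeff_C_mul, coeff_X_pow]
      by_cases h : m = i
      · subst h; ring
      · simp [h]

lemma neg_one_pow_congr {a b : ℕ} (h : a % 2 = b % 2) : ((-1 : k) ^ a) = (-1) ^ b := by
  rcases Nat.even_or_odd a with ha | ha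
  · have hb : Even b := by rw [Nat.even_iff] at *; omega
    rw [ha.neg_one_pow, hb.neg_one_pow]
  · have hb : Odd b := by rw [Nat.odd_iff] at *; omega
    rw [ha.neg_one_pow, hb.neg_one_pow]

variable (n : ℕ) (f : k[X])

/-- the functional `p ↦ coeff (2n) of (p mod f)`. -/
noncomputable def lamL : k[X] →ₗ[k] k :=
  (Polynomial.lcoeff k (2 * n)).comp (Polynomial.modByMonicHom f)

lemma lamL_apply (p : k[X]) : lamL n f p = (p %ₘ f).coeff (2 * n) := rfl

variable {n f}
variable (hm : f.Monic) (hdeg : f.natDegree = 2 * n + 1)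
variable (hodd : ∀ l, l % 2 = 0 → f.coeff l = 0)

include hm hdeg in
lemma lam_of_deg_le {p : k[X]} (hp : p.natDegree ≤ 2 * n) :
    lamL n f p = p.coeff (2 * n) := by
  rw [lamL_apply, (modByMonic_eq_self_iff hm).2]
  rw [degree_eq_natDegree hm.ne_zero, hdeg]
  exact lt_of_le_of_lt degree_le_natDegree (by exact_mod_cast Nat.lt_succ_of_le hp)

include hm hdeg in
lemma lam_X_pow {m : ℕ} (h : m ≤ 2 * n) :
    lamL n f (X ^ m) = if m = 2 * n then 1 else 0 := by
  rw [lam_of_deg_le hm hdeg (by simpa using h), coeff_X_pow]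
  simp [eq_comm]

include hm in
lemma lam_mul_f (q : k[X]) : lamL n f (f * q) = 0 := by
  rw [lamL_apply, (modByMonic_eq_zero_iff_dvd hm).2 ⟨q, rfl⟩]
  simp

lemma lam_C_mul (c : k) (p : k[X]) : lamL n f (C c * p) = c * lamL n f p := by
  rw [← smul_eq_C_mul, _root_.map_smul, smul_eq_mul]


include hodd in
lemma f_comp_negX : f.comp (-X) = -f := by
  ext m
  rw [coeff_comp_negX, coeff_neg]
  rcases Nat.even_or_odd m with he | ho
  · rw [hodd m (Nat.even_iff.1 he)]; ring
  · rw [ho.neg_one_pow]; ring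

include hm hdeg hodd in
lemma lam_comp_negX (p : k[X]) : lamL n f (p.comp (-X)) = lamL n f p := by
  have hsplit : p %ₘ f + f * (p /ₘ f) = p := modByMonic_add_div p f
  have h1 : p.comp (-X) = (p %ₘ f).comp (-X) + f * (-((p /ₘ f).comp (-X))) := by
    conv_lhs => rw [← hsplit]
    rw [add_comp, mul_comp, f_comp_negX hodd]
    ring
  rw [h1, map_add, lam_mul_f hm, add_zero]
  have hrdeg : (p %ₘ f).natDegree ≤ 2 * n := by
    by_cases h0 : p %ₘ f = 0
    · simp [h0]
    · have := degree_modByMonic_lt p hm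
      rw [degree_eq_natDegree hm.ne_zero, hdeg] at this
      have := (natDegree_lt_iff_degree_lt h0).2 (this.trans_le le_rfl)
      omega
  have hcdeg : ((p %ₘ f).comp (-X)).natDegree ≤ 2 * n := by
    refine le_trans natDegree_comp_le ?_
    have : (-X : k[X]).natDegree = 1 := by simp
    rw [this, mul_one]; exact hrdeg
  rw [lam_of_deg_le hm hdeg hcdeg, coeff_comp_negX, Even.neg_one_pow ⟨n, by ring⟩, one_mul,
    lamL_apply]

include hm hdeg hodd in
lemma lam_X_pow_odd (hchar : (2 : k) ≠ 0) {m : ℕ} (h : m % 2 = 1) : lamL n f (X ^ m) = 0 := by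
  have h1 : (X ^ m : k[X]).comp (-X) = -X ^ m := by
    rw [pow_comp, X_comp, negX_pow, Odd.neg_one_pow (Nat.odd_iff.2 h)]
    simp
  have := lam_comp_negX hm hdeg hodd (X ^ m : k[X])
  rw [h1, map_neg] at this
  have h2 : (2 : k) * lamL n f (X ^ m) = 0 := by linear_combination -this
  rcases mul_eq_zero.1 h2 with h | h
  · exact absurd h hchar
  · exact h


variable (n f) in
/-- truncated quotient of `f` by `X^(2n+1-b)`: `h_b = Σ_{m ≤ b} f_{2n+1-b+m} X^m`. -/
noncomputable def hpoly (b : ℕ) : k[X] :=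
  ∑ m ∈ Finset.range (b + 1), C (f.coeff (2 * n + 1 - b + m)) * X ^ m

variable (n f) in
/-- remainder: lower part of `f`. -/
noncomputable def rpoly (b : ℕ) : k[X] :=
  ∑ m ∈ Finset.range (2 * n + 1 - b), C (f.coeff m) * X ^ m

lemma hpoly_coeff (b m : ℕ) :
    (hpoly n f b).coeff m = if m ≤ b then f.coeff (2 * n + 1 - b + m) else 0 := by
  rw [hpoly, finset_sum_coeff]
  have : ∀ mm ∈ Finset.range (b + 1),
      (C (f.coeff (2 * n + 1 - b + mm)) * X ^ mm).coeff m
        = if mm = m then f.coeff (2 * n + 1 - b + mm) else 0 := by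
    intro mm _
    rw [coeff_C_mul, coeff_X_pow]
    by_cases h : m = mm <;> simp [h, eq_comm]
  rw [Finset.sum_congr rfl this, Finset.sum_ite_eq' (Finset.range (b + 1)) m]
  simp [Nat.lt_succ_iff]

lemma rpoly_coeff (b m : ℕ) :
    (rpoly n f b).coeff m = if m < 2 * n + 1 - b then f.coeff m else 0 := by
  rw [rpoly, finset_sum_coeff]
  have : ∀ mm ∈ Finset.range (2 * n + 1 - b),
      (C (f.coeff mm) * X ^ mm).coeff m = if mm = m then f.coeff mm else 0 := by
    intro mm _
    rw [coeff_C_mul, coeff_X_pow]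
    by_cases h : m = mm <;> simp [h, eq_comm]
  rw [Finset.sum_congr rfl this, Finset.sum_ite_eq' _ m]
  simp only [Finset.mem_range]

lemma hpoly_natDegree_le (b : ℕ) : (hpoly n f b).natDegree ≤ b :=
  natDegree_le_iff_coeff_eq_zero.2 fun _ hN => by rw [hpoly_coeff]; simp [Nat.not_le.2 hN]

lemma rpoly_natDegree_le (b : ℕ) : (rpoly n f b).natDegree ≤ 2 * n - b :=
  natDegree_le_iff_coeff_eq_zero.2 fun N hN => by
    rw [rpoly_coeff]
    have : ¬ N < 2 * n + 1 - b := by omega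
    simp [this]

omit hm in
include hdeg in
lemma hpoly_key {b : ℕ} (hb : b ≤ 2 * n) :
    X ^ (2 * n + 1 - b) * hpoly n f b + rpoly n f b = f := by
  ext l
  rw [coeff_add, coeff_X_pow_mul', hpoly_coeff, rpoly_coeff]
  by_cases h1 : 2 * n + 1 - b ≤ l
  · have h2 : ¬ l < 2 * n + 1 - b := by omega
    simp only [if_pos h1, if_neg h2, add_zero]
    by_cases h3 : l - (2 * n + 1 - b) ≤ b
    · rw [if_pos h3]
      congr 1
      omega
    · rw [if_neg h3]
      have : f.natDegree < l := by omega
      exact (coeff_eq_zero_of_natDegree_lt this).symm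
  · have h2 : l < 2 * n + 1 - b := by omega
    simp [h1, h2]

include hm hdeg in
lemma lam_X_pow_mul_hpoly_of_big {i b : ℕ} (hb : b ≤ 2 * n) (hi : i ≤ 2 * n)
    (hib : 2 * n + 1 ≤ i + b) : lamL n f (X ^ i * hpoly n f b) = 0 := by
  have hsplit : X ^ i * hpoly n f b
      = f * X ^ (i - (2 * n + 1 - b)) - X ^ (i - (2 * n + 1 - b)) * rpoly n f b := by
    have : (i - (2 * n + 1 - b)) + (2 * n + 1 - b) = i := by omega
    calc X ^ i * hpoly n f b
        = X ^ (i - (2 * n + 1 - b)) * (X ^ (2 * n + 1 - b) * hpoly n f b + rpoly n f b)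
          - X ^ (i - (2 * n + 1 - b)) * rpoly n f b := by
          rw [mul_add, ← mul_assoc, ← pow_add, this]
          ring
      _ = _ := by rw [hpoly_key hdeg hb]; ring
  rw [hsplit, map_sub, lam_mul_f hm, zero_sub, neg_eq_zero]
  have hdg : (X ^ (i - (2 * n + 1 - b)) * rpoly n f b).natDegree < 2 * n := by
    refine lt_of_le_of_lt (natDegree_mul_le.trans ?_) (show 2*n - 1 < 2*n by omega)
    rw [natDegree_X_pow]
    have := rpoly_natDegree_le (n := n) (f := f) b
    omega
  rw [lam_of_deg_le hm hdeg hdg.le]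
  exact coeff_eq_zero_of_natDegree_lt hdg

include hm hdeg in
lemma lam_X_pow_mul_hpoly {i b : ℕ} (hi : i ≤ n) (hbn : n < b) (hb : b ≤ 2 * n) :
    lamL n f (X ^ i * hpoly n f b) = if i + b = 2 * n then 1 else 0 := by
  rcases lt_trichotomy (i + b) (2 * n + 1) with hlt | heq | hgt
  · have hdg : (X ^ i * hpoly n f b).natDegree ≤ 2 * n := by
      refine natDegree_mul_le.trans ?_
      rw [natDegree_X_pow]
      have := hpoly_natDegree_le (n := n) (f := f) b
      omega
    rw [lam_of_deg_le hm hdeg hdg, coeff_X_pow_mul', hpoly_coeff]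
    by_cases hc : i + b = 2 * n
    · have h1 : i ≤ 2 * n := by omega
      have h2 : 2 * n - i ≤ b := by omega
      rw [if_pos h1, if_pos h2, if_pos hc]
      have : 2 * n + 1 - b + (2 * n - i) = f.natDegree := by omega
      rw [this, hm.coeff_natDegree]
    · have h1 : i ≤ 2 * n := by omega
      rw [if_pos h1, if_neg hc]
      have h2 : ¬ (2 * n - i ≤ b) := by omega
      rw [if_neg h2]
  · rw [lam_X_pow_mul_hpoly_of_big hm hdeg hb (by omega) (by omega), if_neg (by omega)]
  · rw [lam_X_pow_mul_hpoly_of_big hm hdeg hb (by omega) (by omega), if_neg (by omega)]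

include hodd in
lemma hpoly_comp_negX {b : ℕ} (hb : b ≤ 2 * n) :
    (hpoly n f b).comp (-X) = C ((-1 : k) ^ b) * hpoly n f b := by
  ext m
  rw [coeff_comp_negX, coeff_C_mul, hpoly_coeff]
  by_cases h : m ≤ b
  · rw [if_pos h]
    by_cases hz : f.coeff (2 * n + 1 - b + m) = 0
    · rw [hz]; ring
    · have hoddl : (2 * n + 1 - b + m) % 2 = 1 := by
        rcases Nat.even_or_odd (2 * n + 1 - b + m) with he | ho
        · exact absurd (hodd _ (Nat.even_iff.1 he)) hz
        · exact Nat.odd_iff.1 ho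
      have : m % 2 = b % 2 := by omega
      rw [neg_one_pow_congr this]
  · rw [if_neg h]; ring


variable (n f) in
/-- the bilinear form `B(p,q) = (-1)^n λ(p·q(-X))`. -/
noncomputable def Bf (p q : k[X]) : k := (-1 : k) ^ n * lamL n f (p * q.comp (-X))

include hm hdeg hodd in
lemma Bf_symm (p q : k[X]) : Bf n f p q = Bf n f q p := by
  unfold Bf
  congr 1
  have h1 : (p * q.comp (-X)).comp (-X) = q * p.comp (-X) := by
    rw [mul_comp, comp_assoc]
    have : (-X : k[X]).comp (-X) = X := by rw [neg_comp, X_comp, neg_neg]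
    rw [this, comp_X, mul_comm]
  rw [← h1, lam_comp_negX hm hdeg hodd]

lemma Bf_sub_right (p q r : k[X]) : Bf n f p (q - r) = Bf n f p q - Bf n f p r := by
  unfold Bf
  rw [sub_comp, mul_sub, map_sub]
  ring

lemma Bf_C_mul_right (c : k) (p q : k[X]) : Bf n f p (C c * q) = c * Bf n f p q := by
  unfold Bf
  rw [mul_comp, C_comp, ← mul_assoc, mul_comm p (C c), mul_assoc, lam_C_mul]
  ring

lemma Bf_sum_right {ι : Type*} (s : Finset ι) (p : k[X]) (F : ι → k[X]) :
    Bf n f p (∑ b ∈ s, F b) = ∑ b ∈ s, Bf n f p (F b) := by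
  unfold Bf
  have : (∑ b ∈ s, F b).comp (-X) = ∑ b ∈ s, (F b).comp (-X) := by
    simp only [Polynomial.comp, Polynomial.eval₂_finset_sum]
  rw [this, Finset.mul_sum, map_sum, Finset.mul_sum]

include hm hdeg in
lemma Bf_X_pow {i j : ℕ} (h : i + j ≤ 2 * n) :
    Bf n f (X ^ i) (X ^ j) = (-1 : k) ^ (n + j) * (if i + j = 2 * n then 1 else 0) := by
  unfold Bf
  rw [pow_comp, X_comp, negX_pow]
  have : (X : k[X]) ^ i * (C ((-1 : k) ^ j) * X ^ j) = C ((-1 : k) ^ j) * X ^ (i + j) := by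
    rw [pow_add]; ring
  rw [this, lam_C_mul, lam_X_pow hm hdeg h, pow_add]
  ring

variable (n f) in
/-- `v_b = (-1)^(n+b) h_b`. -/
noncomputable def vpoly (b : ℕ) : k[X] := C ((-1 : k) ^ (n + b)) * hpoly n f b

include hm hdeg hodd in
lemma Bf_X_pow_v {i b : ℕ} (hi : i ≤ n) (hbn : n < b) (hb : b ≤ 2 * n) :
    Bf n f (X ^ i) (vpoly n f b) = if i + b = 2 * n then 1 else 0 := by
  unfold Bf vpoly
  rw [mul_comp, C_comp, hpoly_comp_negX hodd hb]
  have : (X : k[X]) ^ i * (C ((-1 : k) ^ (n + b)) * (C ((-1 : k) ^ b) * hpoly n f b))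
      = C ((-1 : k) ^ (n + b) * (-1 : k) ^ b) * (X ^ i * hpoly n f b) := by
    rw [_root_.map_mul]; ring
  rw [this, lam_C_mul, lam_X_pow_mul_hpoly hm hdeg hi hbn hb]
  have hsign : (-1 : k) ^ n * ((-1 : k) ^ (n + b) * (-1 : k) ^ b) = 1 := by
    rw [← pow_add, ← pow_add]
    exact Even.neg_one_pow ⟨n + b, by ring⟩
  rw [← mul_assoc, hsign, one_mul]

variable (n f) in
/-- the Gram matrix entries of the `v` sector. -/
noncomputable def Cmat (a b : Fin (2 * n + 1)) : k :=
  Bf n f (vpoly n f (a : ℕ)) (vpoly n f (b : ℕ))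

variable (n f) in
/-- the adapted basis. -/
noncomputable def wpoly (a : Fin (2 * n + 1)) : k[X] :=
  if (a : ℕ) ≤ n then X ^ (a : ℕ)
  else vpoly n f (a : ℕ) - C (2⁻¹ : k) *
    ∑ b ∈ Finset.univ.filter (fun b : Fin (2 * n + 1) => n < (b : ℕ)),
      C (Cmat n f a b) * X ^ (2 * n - (b : ℕ))

include hm hdeg hodd in
lemma Cmat_symm (a b : Fin (2 * n + 1)) : Cmat n f a b = Cmat n f b a :=
  Bf_symm hm hdeg hodd _ _

include hm hdeg hodd in
lemma Bf_X_w {i : ℕ} (hi : i ≤ n) (b : Fin (2 * n + 1)) :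
    Bf n f (X ^ i) (wpoly n f b) = if i + (b : ℕ) = 2 * n then 1 else 0 := by
  have hble : (b : ℕ) ≤ 2 * n := by omega
  unfold wpoly
  by_cases hb : (b : ℕ) ≤ n
  · rw [if_pos hb, Bf_X_pow hm hdeg (by omega)]
    by_cases hc : i + (b : ℕ) = 2 * n
    · have hbn : (b : ℕ) = n := by omega
      rw [if_pos hc, hbn, mul_one]
      exact Even.neg_one_pow ⟨n, rfl⟩
    · simp [hc]
  · push_neg at hb
    rw [if_neg (by omega), Bf_sub_right, Bf_C_mul_right, Bf_sum_right]
    have hz : ∀ b' ∈ Finset.univ.filter (fun b' : Fin (2 * n + 1) => n < (b' : ℕ)),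
        Bf n f (X ^ i) (C (Cmat n f b b') * X ^ (2 * n - (b' : ℕ))) = 0 := by
      intro b' hb'
      simp only [Finset.mem_filter] at hb'
      rw [Bf_C_mul_right, Bf_X_pow hm hdeg (by omega)]
      have : ¬ (i + (2 * n - (b' : ℕ)) = 2 * n) := by omega
      rw [if_neg this, mul_zero, mul_zero]
    rw [Finset.sum_congr rfl hz, Finset.sum_const_zero, mul_zero, sub_zero,
      Bf_X_pow_v hm hdeg hodd hi hb hble]

include hm hdeg hodd in
lemma Bf_w_w (hchar : (2 : k) ≠ 0) (a b : Fin (2 * n + 1)) :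
    Bf n f (wpoly n f a) (wpoly n f b) = if (a : ℕ) + (b : ℕ) = 2 * n then 1 else 0 := by
  by_cases ha : (a : ℕ) ≤ n
  · have : wpoly n f a = X ^ (a : ℕ) := if_pos ha
    rw [this, Bf_X_w hm hdeg hodd ha b]
  · push_neg at ha
    by_cases hb : (b : ℕ) ≤ n
    · have : wpoly n f b = X ^ (b : ℕ) := if_pos hb
      rw [Bf_symm hm hdeg hodd, this, Bf_X_w hm hdeg hodd hb a, Nat.add_comm (b : ℕ) (a : ℕ)]
    · push_neg at hb
      -- both `> n`
      have hfilter : ∀ (c d : Fin (2 * n + 1)), n < (d : ℕ) →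
          Bf n f (wpoly n f c) (vpoly n f (d : ℕ)) = Cmat n f c d - 2⁻¹ * Cmat n f c d
            ∨ True := fun _ _ _ => Or.inr trivial
      -- expand the left argument
      have hexp : ∀ c : Fin (2 * n + 1), n < (c : ℕ) → ∀ q : k[X],
          Bf n f (wpoly n f c) q = Bf n f (vpoly n f (c : ℕ)) q
            - 2⁻¹ * ∑ b' ∈ Finset.univ.filter (fun b' : Fin (2 * n + 1) => n < (b' : ℕ)),
                Cmat n f c b' * Bf n f (X ^ (2 * n - (b' : ℕ))) q := by
        intro c hc q
        have h1 : wpoly n f c = vpoly n f (c : ℕ) - C (2⁻¹ : k) *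
            ∑ b' ∈ Finset.univ.filter (fun b' : Fin (2 * n + 1) => n < (b' : ℕ)),
              C (Cmat n f c b') * X ^ (2 * n - (b' : ℕ)) := if_neg (by omega)
        rw [h1]
        rw [Bf_symm hm hdeg hodd, Bf_sub_right, Bf_C_mul_right, Bf_sum_right]
        rw [Bf_symm hm hdeg hodd q (vpoly n f (c : ℕ))]
        congr 2
        refine Finset.sum_congr rfl fun b' hb' => ?_
        rw [Bf_C_mul_right, Bf_symm hm hdeg hodd]
      have collapse : ∀ c d : Fin (2 * n + 1), n < (c : ℕ) → n < (d : ℕ) →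
          ∑ b' ∈ Finset.univ.filter (fun b' : Fin (2 * n + 1) => n < (b' : ℕ)),
            Cmat n f c b' * Bf n f (X ^ (2 * n - (b' : ℕ))) (vpoly n f (d : ℕ))
          = Cmat n f c d := by
        intro c d hc hd
        have : ∀ b' ∈ Finset.univ.filter (fun b' : Fin (2 * n + 1) => n < (b' : ℕ)),
            Cmat n f c b' * Bf n f (X ^ (2 * n - (b' : ℕ))) (vpoly n f (d : ℕ))
              = if b' = d then Cmat n f c b' else 0 := by
          intro b' hb'
          simp only [Finset.mem_filter] at hb'
          rw [Bf_X_pow_v hm hdeg hodd (by omega) hd (by omega)]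
          by_cases he : b' = d
          · have : 2 * n - (b' : ℕ) + (d : ℕ) = 2 * n := by
              rw [he]; omega
            rw [if_pos this, if_pos he, mul_one]
          · have hne : (b' : ℕ) ≠ (d : ℕ) := fun hh => he (Fin.ext hh)
            have : ¬ (2 * n - (b' : ℕ) + (d : ℕ) = 2 * n) := by omega
            rw [if_neg this, if_neg he, mul_zero]
        rw [Finset.sum_congr rfl this, Finset.sum_ite_eq' _ d]
        rw [if_pos (by simp only [Finset.mem_filter, Finset.mem_univ, true_and]; omega)]
      have hcol2 : ∑ a' ∈ Finset.univ.filter (fun a' : Fin (2 * n + 1) => n < (a' : ℕ)),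
          Cmat n f a a' * Bf n f (X ^ (2 * n - (a' : ℕ))) (wpoly n f b)
          = Cmat n f a b := by
        have hterm : ∀ a' ∈ Finset.univ.filter (fun a' : Fin (2 * n + 1) => n < (a' : ℕ)),
            Cmat n f a a' * Bf n f (X ^ (2 * n - (a' : ℕ))) (wpoly n f b)
              = if a' = b then Cmat n f a a' else 0 := by
          intro a' ha'
          simp only [Finset.mem_filter] at ha'
          have hlt := a'.isLt
          rw [Bf_X_w hm hdeg hodd (by omega) b]
          by_cases he : a' = b
          · have : 2 * n - (a' : ℕ) + (b : ℕ) = 2 * n := by rw [he]; omega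
            rw [if_pos this, if_pos he, mul_one]
          · have hne : (a' : ℕ) ≠ (b : ℕ) := fun hh => he (Fin.ext hh)
            have : ¬ (2 * n - (a' : ℕ) + (b : ℕ) = 2 * n) := by omega
            rw [if_neg this, if_neg he, mul_zero]
        rw [Finset.sum_congr rfl hterm, Finset.sum_ite_eq' _ b]
        rw [if_pos (by simp only [Finset.mem_filter, Finset.mem_univ, true_and]; omega)]
      rw [hexp a (by omega) (wpoly n f b), hcol2]
      have h1 : Bf n f (vpoly n f (a : ℕ)) (wpoly n f b)
          = Cmat n f b a - 2⁻¹ * Cmat n f b a := by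
        rw [Bf_symm hm hdeg hodd, hexp b (by omega) (vpoly n f (a : ℕ)),
          collapse b a (by omega) (by omega)]
        rfl
      rw [h1, Cmat_symm hm hdeg hodd b a, if_neg (by omega)]
      have h2 : (2⁻¹ : k) + 2⁻¹ = 1 := by
        have := mul_inv_cancel₀ hchar
        linear_combination this
      linear_combination (-(Cmat n f a b)) * h2


include hm hdeg in
lemma wpoly_natDegree_le (a : Fin (2 * n + 1)) : (wpoly n f a).natDegree ≤ (a : ℕ) := by
  unfold wpoly
  by_cases ha : (a : ℕ) ≤ n
  · rw [if_pos ha, natDegree_X_pow]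
  · push_neg at ha
    rw [if_neg (by omega)]
    refine (natDegree_sub_le _ _).trans (max_le ?_ ?_)
    · exact (natDegree_C_mul_le _ _).trans ((hpoly_natDegree_le _).trans (le_refl _))
    · refine (natDegree_C_mul_le _ _).trans ?_
      refine natDegree_sum_le_of_forall_le _ _ fun b' hb' => ?_
      simp only [Finset.mem_filter] at hb'
      refine (natDegree_C_mul_le _ _).trans ?_
      rw [natDegree_X_pow]
      omega

include hm hdeg in
lemma wpoly_coeff_diag (a : Fin (2 * n + 1)) :
    (wpoly n f a).coeff (a : ℕ)
      = if (a : ℕ) ≤ n then 1 else (-1 : k) ^ (n + (a : ℕ)) := by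
  have hle := a.isLt
  unfold wpoly
  by_cases ha : (a : ℕ) ≤ n
  · rw [if_pos ha, if_pos ha, coeff_X_pow, if_pos rfl]
  · push_neg at ha
    rw [if_neg (by omega), if_neg (by omega), coeff_sub]
    have h1 : (vpoly n f (a : ℕ)).coeff (a : ℕ) = (-1 : k) ^ (n + (a : ℕ)) := by
      unfold vpoly
      rw [coeff_C_mul, hpoly_coeff, if_pos le_rfl]
      have : 2 * n + 1 - (a : ℕ) + (a : ℕ) = f.natDegree := by omega
      rw [this, hm.coeff_natDegree, mul_one]
    have h2 : (C (2⁻¹ : k) * ∑ b ∈ Finset.univ.filter (fun b : Fin (2 * n + 1) => n < (b : ℕ)),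
        C (Cmat n f a b) * X ^ (2 * n - (b : ℕ))).coeff (a : ℕ) = 0 := by
      rw [coeff_C_mul, finset_sum_coeff]
      have : ∀ b' ∈ Finset.univ.filter (fun b' : Fin (2 * n + 1) => n < (b' : ℕ)),
          (C (Cmat n f a b') * X ^ (2 * n - (b' : ℕ))).coeff (a : ℕ) = 0 := by
        intro b' hb'
        simp only [Finset.mem_filter] at hb'
        rw [coeff_C_mul, coeff_X_pow, if_neg (by omega), mul_zero]
      rw [Finset.sum_congr rfl this, Finset.sum_const_zero, mul_zero]
    rw [h1, h2, sub_zero]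

omit hm hdeg hodd in
lemma bridge (p q : k[X]) (hp : p.natDegree < 2 * n + 1) (hq : q.natDegree < 2 * n + 1) :
    ∑ i : Fin (2 * n + 1), ∑ j : Fin (2 * n + 1),
        p.coeff (i : ℕ) * ((-1 : k) ^ (n + (j : ℕ)) * lamL n f (X ^ ((i : ℕ) + (j : ℕ))))
          * q.coeff (j : ℕ)
      = Bf n f p q := by
  have hP : p = ∑ i ∈ Finset.range (2 * n + 1), C (p.coeff i) * X ^ i := by
    conv_lhs => rw [p.as_sum_range' _ hp]
    exact Finset.sum_congr rfl fun i _ => (C_mul_X_pow_eq_monomial).symm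
  have hQ : q = ∑ j ∈ Finset.range (2 * n + 1), C (q.coeff j) * X ^ j := by
    conv_lhs => rw [q.as_sum_range' _ hq]
    exact Finset.sum_congr rfl fun j _ => (C_mul_X_pow_eq_monomial).symm
  have key : lamL n f (p * q.comp (-X)) = ∑ i ∈ Finset.range (2 * n + 1),
      ∑ j ∈ Finset.range (2 * n + 1),
        p.coeff i * q.coeff j * ((-1 : k) ^ j * lamL n f (X ^ (i + j))) := by
    conv_lhs => rw [hP, hQ]
    have hqc : ((∑ j ∈ Finset.range (2 * n + 1), C (q.coeff j) * X ^ j) : k[X]).comp (-X)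
        = ∑ j ∈ Finset.range (2 * n + 1), C (q.coeff j) * (C ((-1 : k) ^ j) * X ^ j) := by
      simp only [Polynomial.comp, eval₂_finset_sum, eval₂_mul, eval₂_C, eval₂_X_pow]
      exact Finset.sum_congr rfl fun j _ => by rw [negX_pow]
    rw [hqc, Finset.sum_mul_sum, map_sum]
    refine Finset.sum_congr rfl fun i _ => ?_
    rw [map_sum]
    refine Finset.sum_congr rfl fun j _ => ?_
    have : (C (p.coeff i) * X ^ i) * (C (q.coeff j) * (C ((-1 : k) ^ j) * X ^ j))
        = C (p.coeff i * (q.coeff j * (-1 : k) ^ j)) * X ^ (i + j) := by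
      rw [pow_add, _root_.map_mul, _root_.map_mul]
      ring
    rw [this, lam_C_mul]
    ring
  have hfin : (∑ i : Fin (2 * n + 1), ∑ j : Fin (2 * n + 1),
        p.coeff (i : ℕ) * ((-1 : k) ^ (n + (j : ℕ)) * lamL n f (X ^ ((i : ℕ) + (j : ℕ))))
          * q.coeff (j : ℕ))
      = ∑ i ∈ Finset.range (2 * n + 1), ∑ j ∈ Finset.range (2 * n + 1),
        p.coeff i * ((-1 : k) ^ (n + j) * lamL n f (X ^ (i + j))) * q.coeff j := by
    rw [← Fin.sum_univ_eq_sum_range (fun i => ∑ j ∈ Finset.range (2 * n + 1),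
      p.coeff i * ((-1 : k) ^ (n + j) * lamL n f (X ^ (i + j))) * q.coeff j) (2 * n + 1)]
    exact Finset.sum_congr rfl fun i _ =>
      (Fin.sum_univ_eq_sum_range (fun j =>
        p.coeff (i : ℕ) * ((-1 : k) ^ (n + j) * lamL n f (X ^ ((i : ℕ) + j))) * q.coeff j)
        (2 * n + 1))
  rw [hfin]
  unfold Bf
  rw [key, Finset.mul_sum]
  refine Finset.sum_congr rfl fun i _ => ?_
  rw [Finset.mul_sum]
  refine Finset.sum_congr rfl fun j _ => ?_
  rw [pow_add]
  ring

variable (n f) in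
noncomputable def Wmat : Matrix (Fin (2 * n + 1)) (Fin (2 * n + 1)) k :=
  Matrix.of fun i a => (wpoly n f a).coeff (i : ℕ)

variable (n f) in
noncomputable def Gmat : Matrix (Fin (2 * n + 1)) (Fin (2 * n + 1)) k :=
  Matrix.of fun i j => (-1 : k) ^ (n + (j : ℕ)) * lamL n f (X ^ ((i : ℕ) + (j : ℕ)))

include hm hdeg hodd in
lemma hGram (hchar : (2 : k) ≠ 0) :
    (Wmat n f)ᵀ * Gmat n f * Wmat n f = splitGram k n := by
  ext a b
  have h1 : ((Wmat n f)ᵀ * Gmat n f * Wmat n f) a b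
      = ∑ j : Fin (2 * n + 1), (∑ i : Fin (2 * n + 1),
          (wpoly n f a).coeff (i : ℕ) * ((-1 : k) ^ (n + (j : ℕ))
            * lamL n f (X ^ ((i : ℕ) + (j : ℕ))))) * (wpoly n f b).coeff (j : ℕ) := by
    rw [Matrix.mul_apply]
    refine Finset.sum_congr rfl fun j _ => ?_
    rw [Matrix.mul_apply]
    rfl
  rw [h1]
  have h2 : ∀ j : Fin (2 * n + 1), (∑ i : Fin (2 * n + 1),
      (wpoly n f a).coeff (i : ℕ) * ((-1 : k) ^ (n + (j : ℕ))
        * lamL n f (X ^ ((i : ℕ) + (j : ℕ))))) * (wpoly n f b).coeff (j : ℕ)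
      = ∑ i : Fin (2 * n + 1), (wpoly n f a).coeff (i : ℕ) * ((-1 : k) ^ (n + (j : ℕ))
          * lamL n f (X ^ ((i : ℕ) + (j : ℕ)))) * (wpoly n f b).coeff (j : ℕ) := by
    intro j
    rw [Finset.sum_mul]
  rw [Finset.sum_congr rfl (fun j _ => h2 j), Finset.sum_comm]
  have hdega : (wpoly n f a).natDegree < 2 * n + 1 := by
    have := wpoly_natDegree_le hm hdeg a
    have := a.isLt
    omega
  have hdegb : (wpoly n f b).natDegree < 2 * n + 1 := by
    have := wpoly_natDegree_le hm hdeg b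
    have := b.isLt
    omega
  rw [bridge (wpoly n f a) (wpoly n f b) hdega hdegb, Bf_w_w hm hdeg hodd hchar a b]
  rfl

include hm hdeg hodd in
lemma Gmat_symm (hchar : (2 : k) ≠ 0) : (Gmat n f)ᵀ = Gmat n f := by
  ext i j
  show (-1 : k) ^ (n + (i : ℕ)) * lamL n f (X ^ ((j : ℕ) + (i : ℕ)))
    = (-1 : k) ^ (n + (j : ℕ)) * lamL n f (X ^ ((i : ℕ) + (j : ℕ)))
  rw [Nat.add_comm (j : ℕ) (i : ℕ)]
  rcases Nat.even_or_odd ((i : ℕ) + (j : ℕ)) with he | ho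
  · rw [Nat.even_iff] at he
    rw [neg_one_pow_congr (show (n + (i : ℕ)) % 2 = (n + (j : ℕ)) % 2 by omega)]
  · rw [Nat.odd_iff] at ho
    rw [lam_X_pow_odd hm hdeg hodd hchar ho, mul_zero, mul_zero]


variable (n f) in
noncomputable def Mmat : Matrix (Fin (2 * n + 1)) (Fin (2 * n + 1)) k :=
  Matrix.of fun i j => (if (i : ℕ) = (j : ℕ) + 1 then 1 else 0)
    + (if (j : ℕ) = 2 * n then -f.coeff (i : ℕ) else 0)

include hm hdeg in
lemma lemA (m : ℕ) :
    ∑ l : Fin (2 * n + 1), f.coeff (l : ℕ) * lamL n f (X ^ (m + (l : ℕ)))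
      = - lamL n f (X ^ (m + (2 * n + 1))) := by
  have h0 : lamL n f (f * X ^ m) = 0 := lam_mul_f hm _
  have hF : f = ∑ l ∈ Finset.range (2 * n + 2), C (f.coeff l) * X ^ l := by
    conv_lhs => rw [f.as_sum_range' (2 * n + 2) (by omega)]
    exact Finset.sum_congr rfl fun l _ => (C_mul_X_pow_eq_monomial).symm
  have h1 : f * X ^ m = ∑ l ∈ Finset.range (2 * n + 2), C (f.coeff l) * X ^ (m + l) := by
    conv_lhs => rw [hF]
    rw [Finset.sum_mul]
    exact Finset.sum_congr rfl fun l _ => by rw [pow_add]; ring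
  rw [h1, map_sum] at h0
  have h2 : ∀ l ∈ Finset.range (2 * n + 2),
      lamL n f (C (f.coeff l) * X ^ (m + l)) = f.coeff l * lamL n f (X ^ (m + l)) :=
    fun l _ => lam_C_mul _ _
  rw [Finset.sum_congr rfl h2, Finset.sum_range_succ] at h0
  have h3 : f.coeff (2 * n + 1) = 1 := by
    have := hm.coeff_natDegree
    rwa [hdeg] at this
  rw [h3, one_mul] at h0
  have h4 : ∑ l ∈ Finset.range (2 * n + 1), f.coeff l * lamL n f (X ^ (m + l))
      = ∑ l : Fin (2 * n + 1), f.coeff (l : ℕ) * lamL n f (X ^ (m + (l : ℕ))) :=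
    (Fin.sum_univ_eq_sum_range (fun l => f.coeff l * lamL n f (X ^ (m + l))) (2 * n + 1)).symm
  rw [h4] at h0
  linear_combination h0

lemma sum_delta_mul (c : ℕ) (hc : c < 2 * n + 1) (F : Fin (2 * n + 1) → k) :
    ∑ l : Fin (2 * n + 1), (if (l : ℕ) = c then (1 : k) else 0) * F l = F ⟨c, hc⟩ := by
  rw [Finset.sum_eq_single (⟨c, hc⟩ : Fin (2 * n + 1))]
  · rw [if_pos rfl, one_mul]
  · intro l _ hl
    rw [if_neg (fun hh => hl (Fin.ext hh)), zero_mul]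
  · intro h
    exact absurd (Finset.mem_univ _) h

lemma sum_mul_delta (c : ℕ) (hc : c < 2 * n + 1) (F : Fin (2 * n + 1) → k) :
    ∑ l : Fin (2 * n + 1), F l * (if (l : ℕ) = c then (1 : k) else 0) = F ⟨c, hc⟩ := by
  rw [Finset.sum_eq_single (⟨c, hc⟩ : Fin (2 * n + 1))]
  · rw [if_pos rfl, mul_one]
  · intro l _ hl
    rw [if_neg (fun hh => hl (Fin.ext hh)), mul_zero]
  · intro h
    exact absurd (Finset.mem_univ _) h

lemma sum_mul_delta_zero (c : ℕ) (hc : 2 * n + 1 ≤ c) (F : Fin (2 * n + 1) → k) :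
    ∑ l : Fin (2 * n + 1), F l * (if (l : ℕ) = c then (1 : k) else 0) = 0 := by
  rw [Finset.sum_eq_zero]
  intro l _
  rw [if_neg (by omega), mul_zero]

lemma sum_delta_mul_zero (c : ℕ) (hc : 2 * n + 1 ≤ c) (F : Fin (2 * n + 1) → k) :
    ∑ l : Fin (2 * n + 1), (if (l : ℕ) = c then (1 : k) else 0) * F l = 0 := by
  rw [Finset.sum_eq_zero]
  intro l _
  rw [if_neg (by omega), zero_mul]

include hm hdeg hodd in
lemma lemB (m : ℕ) :
    ∑ l : Fin (2 * n + 1), (-1 : k) ^ (l : ℕ) * f.coeff (l : ℕ) * lamL n f (X ^ (m + (l : ℕ)))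
      = lamL n f (X ^ (m + (2 * n + 1))) := by
  have h1 : ∀ l : Fin (2 * n + 1),
      (-1 : k) ^ (l : ℕ) * f.coeff (l : ℕ) = -f.coeff (l : ℕ) := by
    intro l
    by_cases hz : f.coeff (l : ℕ) = 0
    · rw [hz]; ring
    · have : (l : ℕ) % 2 = 1 := by
        rcases Nat.even_or_odd (l : ℕ) with he | ho
        · exact absurd (hodd _ (Nat.even_iff.1 he)) hz
        · exact Nat.odd_iff.1 ho
      rw [Odd.neg_one_pow (Nat.odd_iff.2 this)]; ring
  calc ∑ l : Fin (2 * n + 1), (-1 : k) ^ (l : ℕ) * f.coeff (l : ℕ) * lamL n f (X ^ (m + (l : ℕ)))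
      = -∑ l : Fin (2 * n + 1), f.coeff (l : ℕ) * lamL n f (X ^ (m + (l : ℕ))) := by
        rw [← Finset.sum_neg_distrib]
        exact Finset.sum_congr rfl fun l _ => by rw [h1 l]; ring
    _ = lamL n f (X ^ (m + (2 * n + 1))) := by rw [lemA hm hdeg m]; ring

include hm hdeg hodd in
lemma hGM (hchar : (2 : k) ≠ 0) :
    (Mmat n f)ᵀ * Gmat n f = - (Gmat n f * Mmat n f) := by
  ext i j
  have hi := i.isLt
  have hj := j.isLt
  have hL : ((Mmat n f)ᵀ * Gmat n f) i j
      = (∑ l : Fin (2 * n + 1), (if (l : ℕ) = (i : ℕ) + 1 then (1:k) else 0) * Gmat n f l j)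
        + (if (i : ℕ) = 2 * n then
            ∑ l : Fin (2 * n + 1), (-f.coeff (l : ℕ)) * Gmat n f l j else 0) := by
    rw [Matrix.mul_apply]
    have : ∀ l : Fin (2 * n + 1), (Mmat n f)ᵀ i l * Gmat n f l j
        = (if (l : ℕ) = (i : ℕ) + 1 then (1:k) else 0) * Gmat n f l j
          + (if (i : ℕ) = 2 * n then (-f.coeff (l : ℕ)) * Gmat n f l j else 0) := by
      intro l
      show ((if (l : ℕ) = (i : ℕ) + 1 then (1:k) else 0)
        + (if (i : ℕ) = 2 * n then -f.coeff (l : ℕ) else 0)) * Gmat n f l j = _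
      by_cases hcase : (i : ℕ) = 2 * n
      · rw [if_pos hcase, if_pos hcase, add_mul]
      · rw [if_neg hcase, if_neg hcase, add_zero, add_zero]
    rw [Finset.sum_congr rfl (fun l _ => this l), Finset.sum_add_distrib]
    congr 1
    by_cases hcase : (i : ℕ) = 2 * n
    · rw [if_pos hcase]; exact Finset.sum_congr rfl fun l _ => if_pos hcase
    · rw [if_neg hcase]; exact Finset.sum_eq_zero fun l _ => if_neg hcase
  have hR : (Gmat n f * Mmat n f) i j
      = (∑ l : Fin (2 * n + 1), Gmat n f i l * (if (l : ℕ) = (j : ℕ) + 1 then (1:k) else 0))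
        + (if (j : ℕ) = 2 * n then
            ∑ l : Fin (2 * n + 1), Gmat n f i l * (-f.coeff (l : ℕ)) else 0) := by
    rw [Matrix.mul_apply]
    have : ∀ l : Fin (2 * n + 1), Gmat n f i l * Mmat n f l j
        = Gmat n f i l * (if (l : ℕ) = (j : ℕ) + 1 then (1:k) else 0)
          + (if (j : ℕ) = 2 * n then Gmat n f i l * (-f.coeff (l : ℕ)) else 0) := by
      intro l
      show Gmat n f i l * ((if (l : ℕ) = (j : ℕ) + 1 then (1:k) else 0)
        + (if (j : ℕ) = 2 * n then -f.coeff (l : ℕ) else 0)) = _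
      by_cases hcase : (j : ℕ) = 2 * n
      · rw [if_pos hcase, if_pos hcase, mul_add]
      · rw [if_neg hcase, if_neg hcase, add_zero, add_zero]
    rw [Finset.sum_congr rfl (fun l _ => this l), Finset.sum_add_distrib]
    congr 1
    by_cases hcase : (j : ℕ) = 2 * n
    · rw [if_pos hcase]; exact Finset.sum_congr rfl fun l _ => if_pos hcase
    · rw [if_neg hcase]; exact Finset.sum_eq_zero fun l _ => if_neg hcase
  rw [Matrix.neg_apply, hL, hR]
  -- last-column sums
  have hsumF : ∀ (i' : Fin (2 * n + 1)),
      ∑ l : Fin (2 * n + 1), (-f.coeff (l : ℕ)) * Gmat n f l j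
        = (-1 : k) ^ (n + (j : ℕ)) * lamL n f (X ^ ((j : ℕ) + (2 * n + 1))) := by
    intro i'
    have : ∀ l : Fin (2 * n + 1), (-f.coeff (l : ℕ)) * Gmat n f l j
        = (-1 : k) ^ (n + (j : ℕ)) * (-(f.coeff (l : ℕ) * lamL n f (X ^ ((j : ℕ) + (l : ℕ))))) := by
      intro l
      show (-f.coeff (l : ℕ)) * ((-1 : k) ^ (n + (j : ℕ)) * lamL n f (X ^ ((l : ℕ) + (j : ℕ)))) = _
      rw [Nat.add_comm (l : ℕ) (j : ℕ)]
      ring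
    rw [Finset.sum_congr rfl (fun l _ => this l), ← Finset.mul_sum, Finset.sum_neg_distrib,
      lemA hm hdeg (j : ℕ)]
    ring
  have hsumG : ∑ l : Fin (2 * n + 1), Gmat n f i l * (-f.coeff (l : ℕ))
      = -((-1 : k) ^ n * lamL n f (X ^ ((i : ℕ) + (2 * n + 1)))) := by
    have : ∀ l : Fin (2 * n + 1), Gmat n f i l * (-f.coeff (l : ℕ))
        = (-1 : k) ^ n * (-((-1 : k) ^ (l : ℕ) * f.coeff (l : ℕ)
            * lamL n f (X ^ ((i : ℕ) + (l : ℕ))))) := by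
      intro l
      show ((-1 : k) ^ (n + (l : ℕ)) * lamL n f (X ^ ((i : ℕ) + (l : ℕ)))) * (-f.coeff (l : ℕ)) = _
      rw [pow_add]
      ring
    rw [Finset.sum_congr rfl (fun l _ => this l), ← Finset.mul_sum, Finset.sum_neg_distrib,
      lemB hm hdeg hodd (i : ℕ)]
    ring
  by_cases hi2 : (i : ℕ) = 2 * n <;> by_cases hj2 : (j : ℕ) = 2 * n
  · -- i = 2n, j = 2n
    rw [if_pos hi2, if_pos hj2, sum_delta_mul_zero ((i : ℕ) + 1) (by omega) _,
      sum_mul_delta_zero ((j : ℕ) + 1) (by omega) _, hsumF i, hsumG, zero_add, zero_add]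
    rw [hj2, hi2]
    have : (-1 : k) ^ (n + 2 * n) = (-1 : k) ^ n := neg_one_pow_congr (by omega)
    rw [this]
    ring
  · -- i = 2n, j < 2n
    rw [if_pos hi2, if_neg hj2, sum_delta_mul_zero ((i : ℕ) + 1) (by omega) _, hsumF i,
      sum_mul_delta ((j : ℕ) + 1) (by omega) (fun l => Gmat n f i l), zero_add, add_zero]
    show (-1:k)^(n+(j:ℕ)) * lamL n f (X ^ ((j:ℕ) + (2*n+1)))
      = -((-1 : k) ^ (n + ((j : ℕ) + 1)) * lamL n f (X ^ ((i : ℕ) + ((j : ℕ) + 1))))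
    have hexp : (i : ℕ) + ((j : ℕ) + 1) = (j : ℕ) + (2 * n + 1) := by omega
    rw [hexp, pow_add, pow_add]
    ring
  · -- i < 2n, j = 2n
    rw [if_neg hi2, if_pos hj2, sum_delta_mul ((i : ℕ) + 1) (by omega) (fun l => Gmat n f l j),
      sum_mul_delta_zero ((j : ℕ) + 1) (by omega) _, hsumG, add_zero, zero_add]
    show (-1:k)^(n+(j:ℕ)) * lamL n f (X ^ (((i:ℕ)+1) + (j:ℕ)))
      = -(-((-1 : k) ^ n * lamL n f (X ^ ((i : ℕ) + (2 * n + 1)))))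
    have hexp : ((i : ℕ) + 1) + (j : ℕ) = (i : ℕ) + (2 * n + 1) := by omega
    rw [hexp, hj2]
    have : (-1 : k) ^ (n + 2 * n) = (-1 : k) ^ n := neg_one_pow_congr (by omega)
    rw [this, neg_neg]
  · -- i < 2n, j < 2n
    rw [if_neg hi2, if_neg hj2, sum_delta_mul ((i : ℕ) + 1) (by omega) (fun l => Gmat n f l j),
      sum_mul_delta ((j : ℕ) + 1) (by omega) (fun l => Gmat n f i l), add_zero, add_zero]
    show (-1:k)^(n+(j:ℕ)) * lamL n f (X ^ (((i:ℕ)+1) + (j:ℕ)))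
      = -((-1 : k) ^ (n + ((j : ℕ) + 1)) * lamL n f (X ^ ((i : ℕ) + ((j : ℕ) + 1))))
    have hexp : ((i : ℕ) + 1) + (j : ℕ) = (i : ℕ) + ((j : ℕ) + 1) := by omega
    rw [hexp, pow_add, pow_add]
    ring


lemma charpoly_conj {N : ℕ} (P A : Matrix (Fin N) (Fin N) k) (hP : IsUnit P.det) :
    (P⁻¹ * A * P).charpoly = A.charpoly := by
  set Pc := (C : k →+* k[X]).mapMatrix P with hPcdef
  set Pc' := (C : k →+* k[X]).mapMatrix P⁻¹ with hPc'def
  have hPc1 : Pc' * Pc = 1 := by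
    rw [hPcdef, hPc'def, ← _root_.map_mul, Matrix.nonsing_inv_mul _ hP, _root_.map_one]
  have key : Pc' * Matrix.charmatrix A * Pc = Matrix.charmatrix (P⁻¹ * A * P) := by
    unfold Matrix.charmatrix
    rw [Matrix.mul_sub, Matrix.sub_mul]
    congr 1
    · have hcomm : Matrix.scalar (Fin N) (X : k[X]) * Pc = Pc * Matrix.scalar (Fin N) (X : k[X]) :=
        Matrix.scalar_commute (X : k[X]) (fun r => mul_comm _ _) Pc
      rw [Matrix.mul_assoc, hcomm, ← Matrix.mul_assoc, hPc1, Matrix.one_mul]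
    · rw [hPc'def, hPcdef, ← _root_.map_mul, ← _root_.map_mul]
  rw [Matrix.charpoly, Matrix.charpoly, ← key, Matrix.det_mul, Matrix.det_mul]
  have hdet1 : Pc'.det * Pc.det = 1 := by
    rw [← Matrix.det_mul, hPc1, Matrix.det_one]
  calc Pc'.det * (Matrix.charmatrix A).det * Pc.det
      = (Pc'.det * Pc.det) * (Matrix.charmatrix A).det := by ring
    _ = (Matrix.charmatrix A).det := by rw [hdet1, one_mul]

lemma Mmat_mulVec_single (j : Fin (2 * n + 1)) (hj : (j : ℕ) < 2 * n) :
    Mmat n f *ᵥ Pi.single j 1 = Pi.single (⟨(j : ℕ) + 1, by omega⟩ : Fin (2 * n + 1)) 1 := by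
  rw [Matrix.mulVec_single_one]
  funext i
  show Mmat n f i j = _
  show (if (i : ℕ) = (j : ℕ) + 1 then (1:k) else 0)
    + (if (j : ℕ) = 2 * n then -f.coeff (i : ℕ) else 0) = _
  rw [if_neg (show ¬ (j : ℕ) = 2 * n by omega), add_zero, Pi.single_apply]
  by_cases h : (i : ℕ) = (j : ℕ) + 1
  · rw [if_pos h, if_pos (by exact Fin.ext h)]
  · rw [if_neg h, if_neg (fun hh => h (by rw [hh]))]

lemma Mmat_mulVec_last :
    Mmat n f *ᵥ Pi.single (⟨2 * n, by omega⟩ : Fin (2 * n + 1)) 1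
      = fun i : Fin (2 * n + 1) => -f.coeff (i : ℕ) := by
  rw [Matrix.mulVec_single_one]
  funext i
  show (if (i : ℕ) = 2 * n + 1 then (1:k) else 0) + (if (2 * n : ℕ) = 2 * n then -f.coeff (i : ℕ) else 0) = _
  rw [if_neg (by have := i.isLt; omega), if_pos rfl, zero_add]

lemma Mmat_pow_mulVec (j : ℕ) (hj : j < 2 * n + 1) :
    (Mmat n f ^ j) *ᵥ Pi.single (0 : Fin (2 * n + 1)) 1
      = Pi.single (⟨j, hj⟩ : Fin (2 * n + 1)) 1 := by
  induction j with
  | zero => rw [pow_zero, Matrix.one_mulVec]; rfl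
  | succ j ih =>
      rw [pow_succ', ← Matrix.mulVec_mulVec, ih (by omega),
        Mmat_mulVec_single ⟨j, by omega⟩ (by show j < 2 * n; omega)]


lemma sum_mulVec' {ι : Type*} (s : Finset ι) {N : ℕ} (F : ι → Matrix (Fin N) (Fin N) k)
    (v : Fin N → k) : (∑ l ∈ s, F l) *ᵥ v = ∑ l ∈ s, (F l *ᵥ v) := by
  induction s using Finset.cons_induction with
  | empty => simp [Matrix.zero_mulVec]
  | cons a s ha ih => rw [Finset.sum_cons, Finset.sum_cons, Matrix.add_mulVec, ih]

include hm hdeg in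
lemma aeval_Mmat (hodd' : True) : Polynomial.aeval (Mmat n f) f = 0 := by
  have h3 : f.coeff (2 * n + 1) = 1 := by
    have := hm.coeff_natDegree
    rwa [hdeg] at this
  have hcol0 : (Polynomial.aeval (Mmat n f) f) *ᵥ Pi.single (0 : Fin (2 * n + 1)) 1 = 0 := by
    rw [aeval_eq_sum_range' (show f.natDegree < 2 * n + 2 by omega), sum_mulVec']
    have hterm : ∀ i ∈ Finset.range (2 * n + 2),
        (f.coeff i • Mmat n f ^ i) *ᵥ Pi.single (0 : Fin (2 * n + 1)) 1
          = f.coeff i • ((Mmat n f ^ i) *ᵥ Pi.single (0 : Fin (2 * n + 1)) 1) := by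
      intro i _
      rw [Matrix.smul_mulVec]
    rw [Finset.sum_congr rfl hterm, Finset.sum_range_succ, h3, one_smul]
    have hlast : (Mmat n f ^ (2 * n + 1)) *ᵥ Pi.single (0 : Fin (2 * n + 1)) 1
        = fun i : Fin (2 * n + 1) => -f.coeff (i : ℕ) := by
      rw [pow_succ', ← Matrix.mulVec_mulVec, Mmat_pow_mulVec (2 * n) (by omega),
        Mmat_mulVec_last]
    have hfirst : ∑ i ∈ Finset.range (2 * n + 1),
        f.coeff i • ((Mmat n f ^ i) *ᵥ Pi.single (0 : Fin (2 * n + 1)) 1)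
          = fun l : Fin (2 * n + 1) => f.coeff (l : ℕ) := by
      rw [← Fin.sum_univ_eq_sum_range
        (fun i => f.coeff i • ((Mmat n f ^ i) *ᵥ Pi.single (0 : Fin (2 * n + 1)) 1)) (2 * n + 1)]
      have : ∀ i : Fin (2 * n + 1),
          f.coeff (i : ℕ) • ((Mmat n f ^ (i : ℕ)) *ᵥ Pi.single (0 : Fin (2 * n + 1)) 1)
            = Pi.single i (f.coeff (i : ℕ)) := by
        intro i
        rw [Mmat_pow_mulVec (i : ℕ) i.isLt]
        have he : (⟨(i : ℕ), i.isLt⟩ : Fin (2 * n + 1)) = i := Fin.ext rfl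
        rw [he, ← Pi.single_smul, smul_eq_mul, mul_one]
      rw [Finset.sum_congr rfl (fun i _ => this i)]
      exact Finset.univ_sum_single _
    rw [hfirst, hlast]
    funext l
    simp
  have hcols : ∀ j : Fin (2 * n + 1),
      (Polynomial.aeval (Mmat n f) f) *ᵥ Pi.single j 1 = 0 := by
    intro j
    have hsingle : Pi.single j (1 : k) = (Mmat n f ^ (j : ℕ)) *ᵥ Pi.single 0 1 := by
      rw [Mmat_pow_mulVec (j : ℕ) j.isLt]
    have hcomm : Polynomial.aeval (Mmat n f) f * Mmat n f ^ (j : ℕ)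
        = Mmat n f ^ (j : ℕ) * Polynomial.aeval (Mmat n f) f := by
      have h1 : Polynomial.aeval (Mmat n f) f * Mmat n f ^ (j : ℕ)
          = Polynomial.aeval (Mmat n f) (f * X ^ (j : ℕ)) := by
        rw [_root_.map_mul, Polynomial.aeval_X_pow]
      have h2 : Mmat n f ^ (j : ℕ) * Polynomial.aeval (Mmat n f) f
          = Polynomial.aeval (Mmat n f) (X ^ (j : ℕ) * f) := by
        rw [_root_.map_mul, Polynomial.aeval_X_pow]
      rw [h1, h2, mul_comm f (X ^ (j : ℕ))]
    rw [hsingle, Matrix.mulVec_mulVec, hcomm, ← Matrix.mulVec_mulVec, hcol0,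
      Matrix.mulVec_zero]
  ext i j
  have h := congrFun (hcols j) i
  rw [Matrix.mulVec_single_one] at h
  exact h

include hm hdeg in
lemma charpoly_Mmat : (Mmat n f).charpoly = f := by
  set d := (Mmat n f).charpoly with hd
  have hdmon : d.Monic := Matrix.charpoly_monic _
  have hddeg : d.natDegree = 2 * n + 1 := by
    rw [hd, Matrix.charpoly_natDegree_eq_dim, Fintype.card_fin]
  by_cases hp : d - f = 0
  · linear_combination (norm := ring_nf) hp
  · exfalso
    have hpdeg : (d - f).natDegree < 2 * n + 1 := by
      have hdegeq : d.degree = f.degree := by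
        rw [degree_eq_natDegree hdmon.ne_zero, degree_eq_natDegree hm.ne_zero, hddeg, hdeg]
      have := degree_sub_lt hdegeq hdmon.ne_zero (by rw [hdmon.leadingCoeff, hm.leadingCoeff])
      rw [degree_eq_natDegree hdmon.ne_zero, hddeg] at this
      exact_mod_cast (natDegree_lt_iff_degree_lt hp).2 this
    have hp0 : Polynomial.aeval (Mmat n f) (d - f) = 0 := by
      rw [map_sub, Matrix.aeval_self_charpoly, aeval_Mmat hm hdeg trivial, sub_zero]
    set p := d - f with hpdef
    have hcoeff : ∀ l : Fin (2 * n + 1), p.coeff (l : ℕ) = 0 := by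
      have hcol : (Polynomial.aeval (Mmat n f) p) *ᵥ Pi.single (0 : Fin (2 * n + 1)) 1 = 0 := by
        rw [hp0, Matrix.zero_mulVec]
      rw [aeval_eq_sum_range' (show p.natDegree < 2 * n + 1 from hpdeg), sum_mulVec'] at hcol
      have hterm : ∀ i ∈ Finset.range (2 * n + 1),
          (p.coeff i • Mmat n f ^ i) *ᵥ Pi.single (0 : Fin (2 * n + 1)) 1
            = p.coeff i • ((Mmat n f ^ i) *ᵥ Pi.single (0 : Fin (2 * n + 1)) 1) := by
        intro i _
        rw [Matrix.smul_mulVec]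
      rw [Finset.sum_congr rfl hterm] at hcol
      rw [← Fin.sum_univ_eq_sum_range
        (fun i => p.coeff i • ((Mmat n f ^ i) *ᵥ Pi.single (0 : Fin (2 * n + 1)) 1))
        (2 * n + 1)] at hcol
      have hsingles : ∀ i : Fin (2 * n + 1),
          p.coeff (i : ℕ) • ((Mmat n f ^ (i : ℕ)) *ᵥ Pi.single (0 : Fin (2 * n + 1)) 1)
            = Pi.single i (p.coeff (i : ℕ)) := by
        intro i
        rw [Mmat_pow_mulVec (i : ℕ) i.isLt]
        have he : (⟨(i : ℕ), i.isLt⟩ : Fin (2 * n + 1)) = i := Fin.ext rfl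
        rw [he, ← Pi.single_smul, smul_eq_mul, mul_one]
      rw [Finset.sum_congr rfl (fun i _ => hsingles i), Finset.univ_sum_single] at hcol
      intro l
      exact congrFun hcol l
    apply hp
    ext m
    rw [coeff_zero]
    by_cases hml : m < 2 * n + 1
    · exact hcoeff ⟨m, hml⟩
    · exact coeff_eq_zero_of_natDegree_lt (by omega)


include hm hdeg in
lemma Wmat_triangular : (Wmat n f).BlockTriangular id := by
  intro i a hia
  show (wpoly n f a).coeff (i : ℕ) = 0
  exact coeff_eq_zero_of_natDegree_lt (lt_of_le_of_lt (wpoly_natDegree_le hm hdeg a) hia)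

include hm hdeg in
lemma Wmat_det_isUnit : IsUnit (Wmat n f).det := by
  rw [Matrix.det_of_upperTriangular (Wmat_triangular hm hdeg)]
  rw [isUnit_iff_ne_zero, Finset.prod_ne_zero_iff]
  intro a _
  show (wpoly n f a).coeff (a : ℕ) ≠ 0
  rw [wpoly_coeff_diag hm hdeg a]
  by_cases ha : (a : ℕ) ≤ n
  · rw [if_pos ha]; exact one_ne_zero
  · rw [if_neg ha]
    exact pow_ne_zero _ (neg_ne_zero.2 one_ne_zero)

end SkewAux

/-- Let `k` be a field of characteristic `≠ 2`, `n ≥ 1`, `W` the split orthogonal space of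
dimension `2n+1` over `k`, `g ∈ k[x]` monic of degree `n`, and suppose `f(x) = x·g(x²)` is
separable.  Then there is a skew self-adjoint endomorphism `T` of `W`
(`⟨Tv,w⟩ = -⟨v,Tw⟩`) with characteristic polynomial `f`. -/
theorem exists_skew_self_adjoint_with_charpoly {k : Type*} [Field k] (hchar : (2 : k) ≠ 0)
    (n : ℕ) (hn : 1 ≤ n)
    (g : k[X]) (hg : g.Monic) (hgdeg : g.natDegree = n)
    (f : k[X]) (hf : f = X * g.comp (X ^ 2)) (hsep : f.Separable) :
    ∃ T : Matrix (Fin (2 * n + 1)) (Fin (2 * n + 1)) k,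
      (∀ v w : Fin (2 * n + 1) → k,
        splitBilin (T.mulVec v) w = - splitBilin v (T.mulVec w)) ∧
      Matrix.charpoly T = f := by
  have hcompmon : (g.comp (X ^ 2)).Monic :=
    hg.comp (monic_X_pow 2) (by rw [natDegree_X_pow]; omega)
  have hm : f.Monic := by
    rw [hf]
    exact monic_X.mul hcompmon
  have hdeg : f.natDegree = 2 * n + 1 := by
    rw [hf, natDegree_mul X_ne_zero hcompmon.ne_zero, natDegree_X, natDegree_comp,
      hgdeg, natDegree_X_pow]
    omega
  have hodd : ∀ l, l % 2 = 0 → f.coeff l = 0 := by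
    intro l hl
    rw [hf]
    rcases l with _ | m
    · rw [mul_coeff_zero, coeff_X_zero, zero_mul]
    · rw [coeff_X_mul, ← Polynomial.expand_eq_comp_X_pow,
        Polynomial.coeff_expand (by norm_num : 0 < 2)]
      rw [if_neg (by omega)]
  set W := SkewAux.Wmat n f with hWdef
  set G := SkewAux.Gmat n f with hGdef
  set M := SkewAux.Mmat n f with hMdef
  have hWdet : IsUnit W.det := SkewAux.Wmat_det_isUnit hm hdeg
  have hGram : Wᵀ * G * W = splitGram k n := SkewAux.hGram hm hdeg hodd hchar
  have hGsym : Gᵀ = G := SkewAux.Gmat_symm hm hdeg hodd hchar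
  have hGM : Mᵀ * G = -(G * M) := SkewAux.hGM hm hdeg hodd hchar
  refine ⟨W⁻¹ * M * W, ?_, ?_⟩
  · -- skew self-adjointness
    set T := W⁻¹ * M * W with hTdef
    have hJsymm : (splitGram k n)ᵀ = splitGram k n := by
      ext i j
      show (if (j : ℕ) + (i : ℕ) = 2 * n then (1 : k) else 0) = _
      rw [Nat.add_comm]
      rfl
    have hWWinv : W * W⁻¹ = 1 := Matrix.mul_nonsing_inv _ hWdet
    have hJWinv : splitGram k n * W⁻¹ = Wᵀ * G := by
      rw [← hGram, Matrix.mul_assoc, hWWinv, Matrix.mul_one]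
    have hWinvTJ : (W⁻¹)ᵀ * splitGram k n = G * W := by
      have h := congrArg Matrix.transpose hJWinv
      rw [Matrix.transpose_mul, hJsymm, Matrix.transpose_mul, hGsym,
        Matrix.transpose_transpose] at h
      exact h
    have hskew : Tᵀ * splitGram k n = -(splitGram k n * T) := by
      rw [hTdef]
      rw [Matrix.transpose_mul (W⁻¹ * M) W, Matrix.transpose_mul W⁻¹ M]
      calc (Wᵀ * (Mᵀ * (W⁻¹)ᵀ)) * splitGram k n
          = Wᵀ * (Mᵀ * ((W⁻¹)ᵀ * splitGram k n)) := by
            rw [Matrix.mul_assoc, Matrix.mul_assoc]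
        _ = Wᵀ * (Mᵀ * (G * W)) := by rw [hWinvTJ]
        _ = Wᵀ * ((Mᵀ * G) * W) := by rw [Matrix.mul_assoc]
        _ = Wᵀ * (-(G * M) * W) := by rw [hGM]
        _ = -(Wᵀ * (G * (M * W))) := by
            rw [Matrix.neg_mul, Matrix.mul_neg, Matrix.mul_assoc]
        _ = -(splitGram k n * (W⁻¹ * M * W)) := by
            congr 1
            rw [Matrix.mul_assoc W⁻¹ M W, ← Matrix.mul_assoc (splitGram k n) W⁻¹ (M * W),
              hJWinv, Matrix.mul_assoc Wᵀ G (M * W)]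
    intro v w
    unfold splitBilin
    have h2 : (Tᵀ * splitGram k n) *ᵥ w = Tᵀ *ᵥ ((splitGram k n) *ᵥ w) :=
      (Matrix.mulVec_mulVec _ _ _).symm
    have h1 : dotProduct (T *ᵥ v) ((splitGram k n) *ᵥ w)
        = dotProduct v ((Tᵀ * splitGram k n) *ᵥ w) := by
      rw [h2, Matrix.dotProduct_mulVec v Tᵀ _, Matrix.vecMul_transpose]
    have h3 : (splitGram k n * T) *ᵥ w = (splitGram k n) *ᵥ (T *ᵥ w) :=
      (Matrix.mulVec_mulVec _ _ _).symm
    rw [h1, hskew, Matrix.neg_mulVec, dotProduct_neg, h3]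
  · rw [SkewAux.charpoly_conj W M hWdet, SkewAux.charpoly_Mmat hm hdeg]
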